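/- Let A = E(w) ⊗ ℤ[x,y] / (x^{n+1}, (n+1)x^n y, w x^n) with gradings |x| = −2, |y| = 2n, |w| = −1. Then the degree-i component A_i is isomorphic as abelian group to ℤ if i ∈ {−2n, −2n+1, −2n+2, …} and i is not a nonnegative multiple of 2n, and to ℤ ⊕ ℤ/(n+1) if i = 2nm with m ≥ 0. -/
import Mathlib


open MvPolynomial

/-- The ring `A = E(w) ⊗ ℤ[x,y] / (x^{n+1}, (n+1)xⁿy, w·xⁿ)`, realized as the quotient of
`ℤ[w,x,y]` by the ideal `(w², x^{n+1}, (n+1)xⁿy, w·xⁿ)` (the relation `w² = 0` encodes the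
exterior algebra `E(w)` on one generator). -/
noncomputable def ringA (n : ℕ) : Type :=
  MvPolynomial (Fin 3) ℤ ⧸
    (Ideal.span {(X 0 : MvPolynomial (Fin 3) ℤ) ^ 2, X 1 ^ (n + 1),
      ((n : MvPolynomial (Fin 3) ℤ) + 1) * X 1 ^ n * X 2, X 0 * X 1 ^ n})

noncomputable instance (n : ℕ) : CommRing (ringA n) :=
  inferInstanceAs (CommRing (MvPolynomial (Fin 3) ℤ ⧸ _))

/-- The image of `w` in `A`. -/
noncomputable def wgen (n : ℕ) : ringA n := Ideal.Quotient.mk _ (X 0)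
/-- The image of `x` in `A`. -/
noncomputable def xgen (n : ℕ) : ringA n := Ideal.Quotient.mk _ (X 1)
/-- The image of `y` in `A`. -/
noncomputable def ygen (n : ℕ) : ringA n := Ideal.Quotient.mk _ (X 2)

section helpers
namespace RingAaux

abbrev Rp : Type := MvPolynomial (Fin 3) ℤ

noncomputable def theIdeal (n : ℕ) : Ideal Rp :=
  Ideal.span {(X 0 : Rp) ^ 2, X 1 ^ (n + 1),
      ((n : Rp) + 1) * X 1 ^ n * X 2, X 0 * X 1 ^ n}

noncomputable def mkq (n : ℕ) : Rp →+* ringA n := Ideal.Quotient.mk (theIdeal n)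

lemma mkq_surj (n : ℕ) : Function.Surjective (mkq n) :=
  Ideal.Quotient.mk_surjective

lemma mkq_eq_zero_iff {n : ℕ} (p : Rp) : mkq n p = 0 ↔ p ∈ theIdeal n :=
  Ideal.Quotient.eq_zero_iff_mem

/-- decomposition of an exponent vector -/
lemma fin3_decomp (d : Fin 3 →₀ ℕ) :
    d = Finsupp.single 0 (d 0) + Finsupp.single 1 (d 1) + Finsupp.single 2 (d 2) := by
  ext a
  fin_cases a <;> simp [Finsupp.single_apply]

lemma monomial_eq_prod (d : Fin 3 →₀ ℕ) :
    (monomial d 1 : Rp) = X 0 ^ (d 0) * X 1 ^ (d 1) * X 2 ^ (d 2) := by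
  conv_lhs => rw [fin3_decomp d]
  rw [X_pow_eq_monomial, X_pow_eq_monomial, X_pow_eq_monomial, monomial_mul, monomial_mul]
  norm_num

/-- generator 3 as a monomial -/
lemma gen3_eq (n : ℕ) :
    ((n : Rp) + 1) * X 1 ^ n * X 2
      = monomial (Finsupp.single 1 n + Finsupp.single 2 1) ((n : ℤ) + 1) := by
  have : ((n : Rp) + 1) = C ((n : ℤ) + 1) := by simp [map_add, map_natCast]
  rw [this, X_pow_eq_monomial, ← pow_one (X 2 : Rp), X_pow_eq_monomial,
    C_mul_monomial, monomial_mul]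
  norm_num

lemma gen4_eq (n : ℕ) :
    (X 0 : Rp) * X 1 ^ n = monomial (Finsupp.single 0 1 + Finsupp.single 1 n) 1 := by
  rw [← pow_one (X 0 : Rp), X_pow_eq_monomial, X_pow_eq_monomial, monomial_mul]
  norm_num

end RingAaux

namespace RingAaux

/-- image of a monomial in the quotient -/
noncomputable def mkm (n : ℕ) (d : Fin 3 →₀ ℕ) : ringA n := mkq n (monomial d 1)

lemma mem_theIdeal_of_dvd {n : ℕ} {g p : Rp}
    (hg : g ∈ ({(X 0 : Rp) ^ 2, X 1 ^ (n + 1),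
      ((n : Rp) + 1) * X 1 ^ n * X 2, X 0 * X 1 ^ n} : Set Rp)) (h : g ∣ p) :
    p ∈ theIdeal n := by
  obtain ⟨c, rfl⟩ := h
  exact Ideal.mul_mem_right _ _ (Ideal.subset_span hg)

lemma mkm_zero_w {n : ℕ} {d : Fin 3 →₀ ℕ} (h : 2 ≤ d 0) : mkm n d = 0 := by
  rw [mkm, mkq_eq_zero_iff]
  refine mem_theIdeal_of_dvd (g := (X 0 : Rp) ^ 2) (by simp) ?_
  rw [monomial_eq_prod]
  exact dvd_mul_of_dvd_left (dvd_mul_of_dvd_left (pow_dvd_pow _ h) _) _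

lemma mkm_zero_x {n : ℕ} {d : Fin 3 →₀ ℕ} (h : n + 1 ≤ d 1) : mkm n d = 0 := by
  rw [mkm, mkq_eq_zero_iff]
  refine mem_theIdeal_of_dvd (g := (X 1 : Rp) ^ (n+1)) (by simp) ?_
  rw [monomial_eq_prod]
  exact dvd_mul_of_dvd_left (dvd_mul_of_dvd_right (pow_dvd_pow _ h) _) _

lemma mkm_zero_wx {n : ℕ} {d : Fin 3 →₀ ℕ} (h0 : 1 ≤ d 0) (h1 : n ≤ d 1) : mkm n d = 0 := by
  rw [mkm, mkq_eq_zero_iff]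
  refine mem_theIdeal_of_dvd (g := (X 0 : Rp) * X 1 ^ n) (by simp) ?_
  rw [monomial_eq_prod]
  exact dvd_mul_of_dvd_left
    (mul_dvd_mul (dvd_pow_self _ (by omega)) (pow_dvd_pow _ h1)) _

lemma mkm_torsion {n : ℕ} {d : Fin 3 →₀ ℕ} (h1 : n ≤ d 1) (h2 : 1 ≤ d 2) :
    ((n : ℤ) + 1) • mkm n d = 0 := by
  have : ((n : ℤ) + 1) • mkm n d = mkq n (((n : Rp) + 1) * monomial d 1) := by
    rw [mkm, zsmul_eq_mul, ← map_intCast (mkq n) ((n : ℤ) + 1), ← map_mul]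
    push_cast
    ring_nf
  rw [this, mkq_eq_zero_iff]
  refine mem_theIdeal_of_dvd (g := ((n : Rp) + 1) * X 1 ^ n * X 2) (by simp) ?_
  rw [monomial_eq_prod]
  obtain ⟨b', hb'⟩ := Nat.exists_eq_add_of_le h1
  obtain ⟨c', hc'⟩ := Nat.exists_eq_add_of_le h2
  rw [hb', hc', pow_add, pow_add, pow_one]
  ring_nf
  exact ⟨X 0 ^ d 0 * X 1 ^ b' * X 2 ^ c', by ring⟩

end RingAaux

namespace RingAaux

def deg (n : ℕ) (d : Fin 3 →₀ ℕ) : ℤ := 2 * n * (d 2) - 2 * (d 1) - (d 0)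

section graded

variable {n : ℕ} (𝒜 : ℤ → Submodule ℤ (ringA n)) [GradedRing 𝒜]
  (hw : wgen n ∈ 𝒜 (-1)) (hx : xgen n ∈ 𝒜 (-2)) (hy : ygen n ∈ 𝒜 (2 * n))

include hw hx hy

lemma mkm_mem (d : Fin 3 →₀ ℕ) : mkm n d ∈ 𝒜 (deg n d) := by
  have h1 : mkm n d = wgen n ^ (d 0) * xgen n ^ (d 1) * ygen n ^ (d 2) := by
    rw [mkm, monomial_eq_prod, map_mul, map_mul, map_pow, map_pow, map_pow]
    rfl
  have h2 : wgen n ^ (d 0) * xgen n ^ (d 1) * ygen n ^ (d 2)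
      ∈ 𝒜 ((d 0) • (-1 : ℤ) + (d 1) • (-2 : ℤ) + (d 2) • (2 * (n : ℤ))) :=
    SetLike.mul_mem_graded
      (SetLike.mul_mem_graded (SetLike.pow_mem_graded _ hw) (SetLike.pow_mem_graded _ hx))
      (SetLike.pow_mem_graded _ hy)
  have h3 : (d 0) • (-1 : ℤ) + (d 1) • (-2 : ℤ) + (d 2) • (2 * (n : ℤ)) = deg n d := by
    simp [deg, nsmul_eq_mul]
    ring
  rw [h1, ← h3]
  exact h2

/-- the span of monomials of a given degree -/
noncomputable def B (n : ℕ) (i : ℤ) : Submodule ℤ (ringA n) :=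
  Submodule.span ℤ (mkm n '' {d | deg n d = i})

lemma B_le (i : ℤ) : B n i ≤ 𝒜 i := by
  rw [B, Submodule.span_le]
  rintro _ ⟨d, hd, rfl⟩
  exact hd ▸ mkm_mem 𝒜 hw hx hy d

lemma iSup_B : (⨆ j, B n j) = ⊤ := by
  rw [eq_top_iff]
  rintro a -
  obtain ⟨p, rfl⟩ := mkq_surj n a
  rw [← support_sum_monomial_coeff p, map_sum]
  refine Submodule.sum_mem _ fun d _ => ?_
  have : mkq n (monomial d (coeff d p)) = (coeff d p) • mkm n d := by
    rw [mkm]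
    have h : (monomial d (coeff d p) : Rp) = coeff d p • monomial d 1 := by
      rw [smul_monomial, smul_eq_mul, mul_one]
    rw [h, map_zsmul]
  rw [this]
  exact Submodule.smul_mem _ _ (Submodule.mem_iSup_of_mem (deg n d)
    (Submodule.subset_span ⟨d, rfl, rfl⟩))

lemma grade_eq (i : ℤ) : (𝒜 i) = B n i := by
  refine le_antisymm ?_ (B_le 𝒜 hw hx hy i)
  intro a ha
  have hmem : a ∈ ⨆ j, B n j := by rw [iSup_B 𝒜 hw hx hy]; trivial
  rw [Submodule.mem_iSup_iff_exists_finsupp] at hmem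
  obtain ⟨f, hf, hsum⟩ := hmem
  have hproj : ∀ j, (GradedRing.proj 𝒜 i) (f j) ∈ B n i := by
    intro j
    rw [GradedRing.proj_apply]
    by_cases hji : j = i
    · subst hji
      rw [DirectSum.decompose_of_mem_same 𝒜 (B_le 𝒜 hw hx hy j (hf j))]
      exact hf j
    · rw [DirectSum.decompose_of_mem_ne 𝒜 (B_le 𝒜 hw hx hy j (hf j)) hji]
      exact Submodule.zero_mem _
  have : a = (GradedRing.proj 𝒜 i) a := by
    rw [GradedRing.proj_apply, DirectSum.decompose_of_mem_same 𝒜 ha]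
  rw [this, ← hsum, Finsupp.sum, map_sum]
  exact Submodule.sum_mem _ fun j _ => hproj j

end graded

end RingAaux

namespace RingAaux

lemma not_le_single {e : Fin 3 →₀ ℕ} {s : Fin 3 →₀ ℕ} (j : Fin 3) (h : e j < s j) :
    ¬ s ≤ e := fun hle => absurd (Finsupp.le_def.mp hle j) (by omega)

lemma coeff_eq_zero_of_mem {n : ℕ} (hn : 1 ≤ n) (e : Fin 3 →₀ ℕ)
    (he0 : e 0 ≤ 1) (he1 : e 1 ≤ n) (hwx : ¬(1 ≤ e 0 ∧ n ≤ e 1))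
    (het : ¬(n ≤ e 1 ∧ 1 ≤ e 2)) {p : Rp} (hp : p ∈ theIdeal n) :
    coeff e p = 0 := by
  have key : ∀ p, p ∈ theIdeal n → ∀ r : Rp, coeff e (r * p) = 0 := by
    intro p hp
    refine Submodule.span_induction ?_ ?_ ?_ ?_ hp
    · rintro x (rfl | rfl | rfl | rfl) r
      · rw [X_pow_eq_monomial, coeff_mul_monomial', if_neg]
        refine not_le_single 0 ?_
        simp; omega
      · rw [X_pow_eq_monomial, coeff_mul_monomial', if_neg]
        refine not_le_single 1 ?_
        simp; omega
      · rw [gen3_eq, coeff_mul_monomial', if_neg]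
        intro hle
        have h1 := Finsupp.le_def.mp hle 1
        have h2 := Finsupp.le_def.mp hle 2
        simp [Finsupp.single_apply] at h1 h2
        exact het ⟨h1, h2⟩
      · rw [gen4_eq, coeff_mul_monomial', if_neg]
        intro hle
        have h1 := Finsupp.le_def.mp hle 0
        have h2 := Finsupp.le_def.mp hle 1
        simp [Finsupp.single_apply] at h1 h2
        exact hwx ⟨h1, h2⟩
    · intro r; simp
    · intro x y _ _ hx hy r
      rw [mul_add, coeff_add, hx, hy, add_zero]
    · intro a x _ hx r
      rw [smul_eq_mul, ← mul_assoc, hx]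
  simpa using key p hp 1

lemma coeff_dvd_of_mem {n : ℕ} (hn : 1 ≤ n) (e : Fin 3 →₀ ℕ)
    (he0 : e 0 = 0) (he1 : e 1 ≤ n) {p : Rp} (hp : p ∈ theIdeal n) :
    ((n : ℤ) + 1) ∣ coeff e p := by
  have key : ∀ p, p ∈ theIdeal n → ∀ r : Rp, ((n : ℤ) + 1) ∣ coeff e (r * p) := by
    intro p hp
    refine Submodule.span_induction ?_ ?_ ?_ ?_ hp
    · rintro x (rfl | rfl | rfl | rfl) r
      · rw [X_pow_eq_monomial, coeff_mul_monomial', if_neg]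
        · exact dvd_zero _
        refine not_le_single 0 ?_
        simp; omega
      · rw [X_pow_eq_monomial, coeff_mul_monomial', if_neg]
        · exact dvd_zero _
        refine not_le_single 1 ?_
        simp; omega
      · rw [gen3_eq, coeff_mul_monomial']
        split_ifs
        · exact Dvd.intro_left _ rfl
        · exact dvd_zero _
      · rw [gen4_eq, coeff_mul_monomial', if_neg]
        · exact dvd_zero _
        refine not_le_single 0 ?_
        simp [Finsupp.single_apply]; omega
    · intro r; simp
    · intro x y _ _ hx hy r
      rw [mul_add, coeff_add]
      exact dvd_add (hx r) (hy r)
    · intro a x _ hx r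
      rw [smul_eq_mul, ← mul_assoc]
      exact hx (r * a)
  simpa using key p hp 1

end RingAaux

namespace RingAaux

noncomputable def mk3 (n a b c : ℕ) : ringA n := mkq n (X 0 ^ a * X 1 ^ b * X 2 ^ c)

noncomputable def e3 (a b c : ℕ) : Fin 3 →₀ ℕ :=
  Finsupp.single 0 a + Finsupp.single 1 b + Finsupp.single 2 c

@[simp] lemma e3_0 (a b c : ℕ) : e3 a b c 0 = a := by simp [e3]
@[simp] lemma e3_1 (a b c : ℕ) : e3 a b c 1 = b := by simp [e3]
@[simp] lemma e3_2 (a b c : ℕ) : e3 a b c 2 = c := by simp [e3]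

lemma mkm_eq_mk3 {n : ℕ} (d : Fin 3 →₀ ℕ) : mkm n d = mk3 n (d 0) (d 1) (d 2) := by
  rw [mkm, monomial_eq_prod]; rfl

lemma mk3_eq_mkm {n : ℕ} (a b c : ℕ) : mk3 n a b c = mkm n (e3 a b c) := by
  rw [mkm_eq_mk3, e3_0, e3_1, e3_2]

lemma deg_e3 {n : ℕ} (a b c : ℕ) :
    deg n (e3 a b c) = 2 * n * c - 2 * b - a := by
  simp [deg]

lemma int_aux1 {N t s : ℤ} (hn : 1 ≤ N) (h : N * t = s) (h1 : -N < s) (h2 : s < N) :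
    t = 0 := by
  rcases lt_trichotomy t 0 with ht | ht | ht
  · nlinarith
  · exact ht
  · exfalso; nlinarith

lemma int_aux2 {N t s : ℤ} (hn : 1 ≤ N) (h : N * t = s) (h1 : 0 ≤ s) (h2 : s ≤ N) :
    t = 0 ∨ t = 1 := by
  rcases lt_trichotomy t 0 with ht | ht | ht
  · exfalso; nlinarith
  · left; exact ht
  · right
    by_contra hne
    have : 2 ≤ t := by omega
    nlinarith

/-- z • (free monomial) = 0 implies z = 0 -/
lemma smul_mk3_eq_zero {n : ℕ} (hn : 1 ≤ n) {a b c : ℕ} (ha : a ≤ 1) (hb : b ≤ n)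
    (hwx : ¬(1 ≤ a ∧ n ≤ b)) (het : ¬(n ≤ b ∧ 1 ≤ c)) {z : ℤ}
    (h : z • mk3 n a b c = 0) : z = 0 := by
  have h1 : z • mk3 n a b c = mkq n (z • monomial (e3 a b c) 1) := by
    rw [mk3_eq_mkm, mkm, ← map_zsmul (mkq n)]
  rw [h1, mkq_eq_zero_iff] at h
  have h2 := coeff_eq_zero_of_mem hn (e3 a b c) (by simpa) (by simpa)
    (by simpa using hwx) (by simpa using het) h
  rw [coeff_smul, coeff_monomial, if_pos rfl, smul_eq_mul, mul_one] at h2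
  exact h2

/-- independence of the two degree-2nm monomials -/
lemma pair_indep {n : ℕ} (hn : 1 ≤ n) (m : ℕ) {z1 z2 : ℤ}
    (h : z1 • mk3 n 0 0 m + z2 • mk3 n 0 n (m + 1) = 0) :
    z1 = 0 ∧ ((n : ℤ) + 1) ∣ z2 := by
  have hne : e3 0 n (m+1) ≠ e3 0 0 m := by
    intro hcontra
    have := congrArg (fun f => f 1) hcontra
    simp at this
    omega
  have h1 : z1 • mk3 n 0 0 m + z2 • mk3 n 0 n (m + 1)
      = mkq n (z1 • monomial (e3 0 0 m) 1 + z2 • monomial (e3 0 n (m+1)) 1) := by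
    rw [mk3_eq_mkm, mk3_eq_mkm, mkm, mkm, map_add, map_zsmul, map_zsmul]
  rw [h1, mkq_eq_zero_iff] at h
  constructor
  · have h2 := coeff_eq_zero_of_mem hn (e3 0 0 m) (by simp) (by simp)
      (by simp) (by intro hh; simp at hh; omega) h
    rw [coeff_add, coeff_smul, coeff_smul, coeff_monomial, if_pos rfl,
      coeff_monomial, if_neg hne] at h2
    simpa using h2
  · have h2 := coeff_dvd_of_mem hn (e3 0 n (m+1)) (by simp) (by simp) h
    rw [coeff_add, coeff_smul, coeff_smul, coeff_monomial, if_neg (Ne.symm hne),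
      coeff_monomial, if_pos rfl] at h2
    simpa using h2

end RingAaux

namespace RingAaux

lemma exists_abc {n : ℕ} (hn : 1 ≤ n) {i : ℤ} (hi : -(2 * (n : ℤ)) < i) :
    ∃ a b c : ℕ, a ≤ 1 ∧ b + 1 ≤ n ∧ 2 * (n : ℤ) * c - 2 * b - a = i := by
  obtain ⟨a, ha, k, h2k⟩ : ∃ a : ℕ, a ≤ 1 ∧ ∃ k : ℤ, 2 * k = i + a := by
    rcases Int.even_or_odd i with ⟨k, hk⟩ | ⟨k, hk⟩
    · exact ⟨0, by omega, k, by omega⟩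
    · exact ⟨1, by omega, k + 1, by omega⟩
  have hk1 : 0 ≤ k + n - 1 := by omega
  set K := (k + (n : ℤ) - 1).toNat with hKdef
  have hKz : (K : ℤ) = k + n - 1 := Int.toNat_of_nonneg hk1
  have hdm := Nat.div_add_mod K n
  have hmlt : K % n < n := Nat.mod_lt _ (by omega)
  refine ⟨a, n - 1 - K % n, K / n, ha, by omega, ?_⟩
  have h1 : (n : ℤ) * (K / n : ℕ) + ((K % n : ℕ) : ℤ) = (K : ℤ) := by exact_mod_cast hdm
  have h2 : ((n - 1 - K % n : ℕ) : ℤ) = (n : ℤ) - 1 - ((K % n : ℕ) : ℤ) := by omega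
  rw [h2]
  linarith

/-- dispatch the monomials that are zero in the quotient -/
lemma mkm_reduce {n : ℕ} (d : Fin 3 →₀ ℕ) :
    mkm n d = 0 ∨ (d 0 ≤ 1 ∧ d 1 ≤ n ∧ ¬(1 ≤ d 0 ∧ n ≤ d 1)) := by
  by_cases h0 : 2 ≤ d 0
  · exact Or.inl (mkm_zero_w h0)
  by_cases h1 : n + 1 ≤ d 1
  · exact Or.inl (mkm_zero_x h1)
  by_cases h2 : 1 ≤ d 0 ∧ n ≤ d 1
  · exact Or.inl (mkm_zero_wx h2.1 h2.2)
  · exact Or.inr ⟨by omega, by omega, h2⟩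

lemma mk3_mem_B {n : ℕ} {i : ℤ} (a b c : ℕ) (h : 2 * (n : ℤ) * c - 2 * b - a = i) :
    mk3 n a b c ∈ B n i := by
  refine Submodule.subset_span ⟨e3 a b c, ?_, (mk3_eq_mkm a b c).symm⟩
  rw [Set.mem_setOf_eq, deg_e3]
  exact h

lemma B_eq_case2 {n : ℕ} (hn : 1 ≤ n) (m : ℕ) :
    B n (2 * (n : ℤ) * m) = Submodule.span ℤ {mk3 n 0 0 m, mk3 n 0 n (m + 1)} := by
  refine le_antisymm ?_ ?_
  · rw [B, Submodule.span_le]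
    rintro _ ⟨d, hd, rfl⟩
    rw [Set.mem_setOf_eq, deg] at hd
    rcases mkm_reduce d with h | ⟨hd0, hd1, hwx⟩
    · rw [h]; exact Submodule.zero_mem _
    have hN : (1 : ℤ) ≤ (n : ℤ) := by exact_mod_cast hn
    have hpar : (2 : ℤ) ∣ (d 0 : ℤ) :=
      ⟨(n : ℤ) * (d 2) - (d 1) - (n : ℤ) * m, by linarith⟩
    have hd0' : d 0 = 0 := by omega
    have hd0z : ((d 0 : ℕ) : ℤ) = 0 := by omega
    have h2X : 2 * ((n : ℤ) * ((d 2 : ℤ) - m)) = 2 * (d 1 : ℤ) := by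
      linear_combination hd + hd0z
    have key : (n : ℤ) * ((d 2 : ℤ) - m) = (d 1 : ℤ) := by linarith
    rcases int_aux2 hN key (by positivity) (by exact_mod_cast hd1) with h | h
    · have e2 : d 2 = m := by omega
      have e1 : d 1 = 0 := by
        rw [h, mul_zero] at key; omega
      rw [mkm_eq_mk3, hd0', e1, e2]
      exact Submodule.subset_span (by left; rfl)
    · have e1 : d 1 = n := by
        have : (d 1 : ℤ) = n := by rw [← key, h, mul_one]
        omega
      have e2 : d 2 = m + 1 := by omega
      rw [mkm_eq_mk3, hd0', e1, e2]
      exact Submodule.subset_span (by right; rfl)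
  · rw [Submodule.span_le]
    rintro _ (rfl | rfl)
    · exact mk3_mem_B 0 0 m (by push_cast; ring)
    · exact mk3_mem_B 0 n (m + 1) (by push_cast; ring)

lemma B_eq_case1a {n : ℕ} (hn : 1 ≤ n) :
    B n (-(2 * (n : ℤ))) = Submodule.span ℤ {mk3 n 0 n 0} := by
  refine le_antisymm ?_ ?_
  · rw [B, Submodule.span_le]
    rintro _ ⟨d, hd, rfl⟩
    rw [Set.mem_setOf_eq, deg] at hd
    rcases mkm_reduce d with h | ⟨hd0, hd1, hwx⟩
    · rw [h]; exact Submodule.zero_mem _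
    have hN : (1 : ℤ) ≤ (n : ℤ) := by exact_mod_cast hn
    have hpar : (2 : ℤ) ∣ (d 0 : ℤ) :=
      ⟨(n : ℤ) * (d 2) - (d 1) + (n : ℤ), by linarith⟩
    have hd0' : d 0 = 0 := by omega
    have hd0z : ((d 0 : ℕ) : ℤ) = 0 := by omega
    have h2X : 2 * ((n : ℤ) * ((d 2 : ℤ) + 1)) = 2 * (d 1 : ℤ) := by
      linear_combination hd + hd0z
    have key : (n : ℤ) * ((d 2 : ℤ) + 1) = (d 1 : ℤ) := by linarith
    rcases int_aux2 hN key (by positivity) (by exact_mod_cast hd1) with h | h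
    · exfalso; omega
    · have e2 : d 2 = 0 := by omega
      have e1 : d 1 = n := by
        have : (d 1 : ℤ) = n := by rw [← key, h, mul_one]
        omega
      rw [mkm_eq_mk3, hd0', e1, e2]
      exact Submodule.subset_span rfl
  · rw [Submodule.span_le, Set.singleton_subset_iff]
    exact mk3_mem_B 0 n 0 (by push_cast; ring)

lemma B_eq_case1b {n : ℕ} (hn : 1 ≤ n) {i : ℤ} (hi : -(2 * (n : ℤ)) < i)
    (hnm : ¬∃ m : ℕ, i = 2 * n * m) :
    ∃ a b c : ℕ, a ≤ 1 ∧ b + 1 ≤ n ∧ 2 * (n : ℤ) * c - 2 * b - a = i ∧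
      B n i = Submodule.span ℤ {mk3 n a b c} := by
  obtain ⟨a, b, c, ha, hb, habc⟩ := exists_abc hn hi
  refine ⟨a, b, c, ha, hb, habc, le_antisymm ?_ ?_⟩
  · rw [B, Submodule.span_le]
    rintro _ ⟨d, hd, rfl⟩
    rw [Set.mem_setOf_eq, deg] at hd
    rcases mkm_reduce d with h | ⟨hd0, hd1, hwx⟩
    · rw [h]; exact Submodule.zero_mem _
    have hN : (1 : ℤ) ≤ (n : ℤ) := by exact_mod_cast hn
    have hpd : (2 : ℤ) ∣ ((d 0 : ℤ) + i) :=
      ⟨(n : ℤ) * (d 2) - (d 1), by linarith⟩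
    have hpa : (2 : ℤ) ∣ ((a : ℤ) + i) :=
      ⟨(n : ℤ) * c - b, by linarith⟩
    have hd0a : d 0 = a := by omega
    have hd0z : ((d 0 : ℕ) : ℤ) = (a : ℤ) := by omega
    have h2X : 2 * ((n : ℤ) * ((d 2 : ℤ) - c)) = 2 * ((d 1 : ℤ) - b) := by
      linear_combination hd - habc + hd0z
    have key : (n : ℤ) * ((d 2 : ℤ) - c) = (d 1 : ℤ) - b := by linarith
    by_cases hd1n : d 1 = n
    · exfalso
      have ha0 : d 0 = 0 := by
        rcases Nat.eq_zero_or_pos (d 0) with h | h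
        · exact h
        · exact absurd ⟨h, hd1n ▸ le_refl n⟩ hwx
      have hbn : (b : ℤ) + 1 ≤ (n : ℤ) := by exact_mod_cast hb
      have hdn : (d 1 : ℤ) = (n : ℤ) := by exact_mod_cast hd1n
      have hs1 : (0 : ℤ) ≤ (d 1 : ℤ) - (b : ℤ) := by omega
      have hs2 : (d 1 : ℤ) - (b : ℤ) ≤ (n : ℤ) := by omega
      rcases int_aux2 hN key hs1 hs2 with h | h
      · rw [h, mul_zero] at key; omega
      · rw [h, mul_one] at key
        have hb0 : (b : ℤ) = 0 := by omega
        refine hnm ⟨c, ?_⟩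
        have haz : (a : ℤ) = 0 := by omega
        linarith [habc]
    · have hlt : (d 1 : ℤ) - b < n := by omega
      have hgt : -(n : ℤ) < (d 1 : ℤ) - b := by omega
      have h := int_aux1 hN key hgt hlt
      have e2 : d 2 = c := by omega
      have e1 : d 1 = b := by rw [h, mul_zero] at key; omega
      rw [mkm_eq_mk3, hd0a, e1, e2]
      exact Submodule.subset_span rfl
  · rw [Submodule.span_le, Set.singleton_subset_iff]
    exact mk3_mem_B a b c habc

end RingAaux

namespace RingAaux

lemma equiv_int {n : ℕ} {A' : Submodule ℤ (ringA n)} {μ : ringA n}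
    (hspan : A' = Submodule.span ℤ {μ})
    (hfree : ∀ z : ℤ, z • μ = 0 → z = 0) :
    Nonempty (A' ≃ₗ[ℤ] ℤ) := by
  subst hspan
  have hμ : μ ∈ Submodule.span ℤ {μ} := Submodule.mem_span_singleton_self μ
  set E : ℤ →ₗ[ℤ] Submodule.span ℤ {μ} :=
    LinearMap.toSpanSingleton ℤ _ ⟨μ, hμ⟩ with hE
  have hinj : Function.Injective E := by
    intro z1 z2 h
    have h2 : (z1 - z2) • μ = 0 := by
      have h3 : z1 • (⟨μ, hμ⟩ : Submodule.span ℤ {μ}) = z2 • ⟨μ, hμ⟩ := h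
      have h4 := congrArg Subtype.val h3
      simp only [SetLike.val_smul] at h4
      rw [sub_smul, h4, sub_self]
    have := hfree _ h2
    omega
  have hsurj : Function.Surjective E := by
    rintro ⟨x, hx⟩
    obtain ⟨z, hz⟩ := Submodule.mem_span_singleton.mp hx
    exact ⟨z, Subtype.ext (by rw [hE]; simpa using hz)⟩
  exact ⟨(LinearEquiv.ofBijective E ⟨hinj, hsurj⟩).symm⟩

lemma equiv_prod {n : ℕ} (hn : 1 ≤ n) (m : ℕ) {A' : Submodule ℤ (ringA n)}
    (hspan : A' = Submodule.span ℤ {mk3 n 0 0 m, mk3 n 0 n (m + 1)}) :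
    Nonempty (A' ≃ₗ[ℤ] ℤ × ZMod (n + 1)) := by
  subst hspan
  set μ1 := mk3 n 0 0 m
  set μ2 := mk3 n 0 n (m + 1)
  set S := Submodule.span ℤ {μ1, μ2} with hS
  have hm1 : μ1 ∈ S := Submodule.subset_span (by left; rfl)
  have hm2 : μ2 ∈ S := Submodule.subset_span (by right; rfl)
  have htorA : ((n : ℤ) + 1) • μ2 = 0 := by
    have := mkm_torsion (n := n) (d := e3 0 n (m + 1)) (by simp) (by simp)
    rwa [← mk3_eq_mkm] at this
  set G1 : ℤ →ₗ[ℤ] S := LinearMap.toSpanSingleton ℤ _ ⟨μ1, hm1⟩ with hG1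
  set T : ℤ →ₗ[ℤ] S := LinearMap.toSpanSingleton ℤ _ ⟨μ2, hm2⟩ with hT
  have hT0 : T.toAddMonoidHom ((n + 1 : ℕ) : ℤ) = 0 := by
    refine Subtype.ext ?_
    show (((n + 1 : ℕ) : ℤ) • (⟨μ2, hm2⟩ : S) : S).val = (0 : ringA n)
    rw [SetLike.val_smul]
    push_cast
    exact htorA
  set G2 : ZMod (n + 1) →+ S := ZMod.lift (n + 1) ⟨T.toAddMonoidHom, hT0⟩ with hG2
  set G : ℤ × ZMod (n + 1) →ₗ[ℤ] S := G1.coprod G2.toIntLinearMap with hG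
  have hGapp : ∀ (z1 z2 : ℤ), G (z1, (z2 : ZMod (n + 1))) = z1 • (⟨μ1, hm1⟩ : S) + z2 • ⟨μ2, hm2⟩ := by
    intro z1 z2
    simp only [hG, LinearMap.coprod_apply, AddMonoidHom.coe_toIntLinearMap, hG2,
      ZMod.lift_coe]
    rfl
  have hsurj : Function.Surjective G := by
    rintro ⟨x, hx⟩
    obtain ⟨z1, z2, hz⟩ := Submodule.mem_span_pair.mp hx
    exact ⟨(z1, (z2 : ZMod (n + 1))), by
      rw [hGapp z1 z2]
      exact Subtype.ext (by simpa using hz)⟩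
  have hinj : Function.Injective G := by
    rw [← LinearMap.ker_eq_bot, eq_bot_iff]
    rintro ⟨z1, w⟩ hker
    obtain ⟨z2, rfl⟩ := ZMod.intCast_surjective w
    rw [LinearMap.mem_ker, hGapp z1 z2] at hker
    have h0 : z1 • μ1 + z2 • μ2 = 0 := by
      have := congrArg Subtype.val hker
      simpa using this
    obtain ⟨hz1, hdvd⟩ := pair_indep hn m h0
    have hz2 : ((z2 : ℤ) : ZMod (n + 1)) = 0 := by
      rw [ZMod.intCast_zmod_eq_zero_iff_dvd]
      push_cast
      exact hdvd
    rw [Submodule.mem_bot, Prod.mk_eq_zero]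
    exact ⟨hz1, hz2⟩
  exact ⟨(LinearEquiv.ofBijective G ⟨hinj, hsurj⟩).symm⟩

end RingAaux


end helpers

open RingAaux in
/-- Let `A = E(w) ⊗ ℤ[x,y]/(x^{n+1}, (n+1)xⁿy, w·xⁿ)` be graded with `|x| = −2`, `|y| = 2n`,
`|w| = −1`.  Then the degree-`i` homogeneous component `A_i` is isomorphic as an abelian
group to `ℤ` when `i ≥ −2n` and `i` is not a nonnegative multiple of `2n`, and to
`ℤ ⊕ ℤ/(n+1)` when `i = 2nm` for some `m ≥ 0`. -/
theorem ringA_graded_pieces (n : ℕ) (hn : 1 ≤ n)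
    (𝒜 : ℤ → Submodule ℤ (ringA n)) [GradedRing 𝒜]
    (hw : wgen n ∈ 𝒜 (-1)) (hx : xgen n ∈ 𝒜 (-2)) (hy : ygen n ∈ 𝒜 (2 * n)) :
    ∀ i : ℤ,
      ((-(2 * (n : ℤ)) ≤ i ∧ ¬ ∃ m : ℕ, i = 2 * n * m) →
        Nonempty ((𝒜 i) ≃ₗ[ℤ] ℤ)) ∧
      (∀ m : ℕ, i = 2 * n * m →
        Nonempty ((𝒜 i) ≃ₗ[ℤ] (ℤ × ZMod (n + 1)))) := by
  intro i
  constructor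
  · rintro ⟨hge, hnm⟩
    have hgr := grade_eq 𝒜 hw hx hy i
    rcases eq_or_lt_of_le hge with heq | hlt
    · subst heq
      refine equiv_int (hgr.trans (B_eq_case1a hn)) ?_
      intro z hz
      exact smul_mk3_eq_zero hn (le_refl 0 |>.trans (by omega)) (le_refl n)
        (by omega) (by omega) hz
    · obtain ⟨a, b, c, ha, hb, habc, hBeq⟩ := B_eq_case1b hn hlt hnm
      refine equiv_int (hgr.trans hBeq) ?_
      intro z hz
      exact smul_mk3_eq_zero hn ha (by omega) (by omega) (by omega) hz
  · intro m him
    subst him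
    exact equiv_prod hn m ((grade_eq 𝒜 hw hx hy _).trans (B_eq_case2 hn m))
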